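/- Let K be a field, let A be a commutative K-algebra that is Jacobson and reduced, and let B be any K-module. Then the natural K-linear map A ⊗_K B → ∏_{m} ((A/m) ⊗_K B), where the product runs over all maximal ideals m of A and the map is induced componentwise by (quotient map A → A/m) ⊗ id_B, is injective. -/
import Mathlib


open TensorProduct

theorem jacobson_reduced_tensor_injective
    (K : Type*) [Field K] (A : Type*) [CommRing A] [Algebra K A]
    [IsJacobsonRing A] [IsReduced A]
    (B : Type*) [AddCommGroup B] [Module K B] :
    Function.Injective
      (LinearMap.pi (fun m : MaximalSpectrum A =>
          TensorProduct.map (Ideal.Quotient.mkₐ K m.asIdeal).toLinearMap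
            (LinearMap.id : B →ₗ[K] B)) :
        (A ⊗[K] B) →ₗ[K] ∀ m : MaximalSpectrum A, (A ⧸ m.asIdeal) ⊗[K] B) := by
  classical
  set b := Module.Basis.ofVectorSpace K B with hb
  set 𝒷 := Algebra.TensorProduct.basis A b with h𝒷
  -- the jacobson radical of ⊥ is ⊥
  have hradbot : (⊥ : Ideal A).radical = ⊥ := by
    have := nilradical_eq_zero A
    rwa [nilradical] at this
  have hbot : (⊥ : Ideal A).jacobson = ⊥ := by
    have hrad : (⊥ : Ideal A).IsRadical := hradbot ▸ Ideal.radical_isRadical ⊥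
    exact (inferInstance : IsJacobsonRing A).out hrad
  -- key computation: coordinates of the image are quotients of coordinates
  have key : ∀ (m : MaximalSpectrum A) (x : A ⊗[K] B),
      (Algebra.TensorProduct.basis (A ⧸ m.asIdeal) b).repr
        (TensorProduct.map (Ideal.Quotient.mkₐ K m.asIdeal).toLinearMap
          (LinearMap.id : B →ₗ[K] B) x)
      = Finsupp.mapRange (Ideal.Quotient.mk m.asIdeal) (map_zero _) (𝒷.repr x) := by
    intro m x
    induction x with
    | zero => simp
    | tmul a v =>
        ext i
        simp only [Algebra.TensorProduct.basis_repr_tmul, h𝒷, Finsupp.mapRange_apply,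
          Finsupp.coe_smul, Pi.smul_apply, Algebra.smul_def, TensorProduct.map_tmul,
          AlgHom.toLinearMap_apply, Ideal.Quotient.mkₐ_eq_mk, LinearMap.id_coe, id_eq]
        rw [map_mul, IsScalarTower.algebraMap_apply K A (A ⧸ m.asIdeal)]
        rfl
    | add x y hx hy =>
        rw [map_add, map_add, hx, hy, map_add, Finsupp.mapRange_add (map_add _)]
  rw [injective_iff_map_eq_zero]
  intro x hx
  have hz : ∀ i, 𝒷.repr x i = 0 := by
    intro i
    have hmem : 𝒷.repr x i ∈ (⊥ : Ideal A).jacobson := by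
      rw [Ideal.jacobson, Ideal.mem_sInf]
      rintro J ⟨-, hJ⟩
      set M : MaximalSpectrum A := ⟨J, hJ⟩ with hM
      have h0 := congrArg (fun f => f i) (key M x)
      have hc : TensorProduct.map (Ideal.Quotient.mkₐ K M.asIdeal).toLinearMap
          (LinearMap.id : B →ₗ[K] B) x = 0 := congrFun hx M
      rw [hc] at h0
      simp only [map_zero, Finsupp.coe_zero, Pi.zero_apply, Finsupp.mapRange_apply] at h0
      exact Ideal.Quotient.eq_zero_iff_mem.mp h0.symm
    rwa [hbot, Ideal.mem_bot] at hmem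
  have : 𝒷.repr x = 0 := Finsupp.ext hz
  exact 𝒷.repr.map_eq_zero_iff.mp this
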